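/- For each iteration of the randomized incremental subgradient method, with ω_k uniformly distributed on I_k = {i : f_i(x_k) > f_i*}, the conditional expectation satisfies E[(f_{ω_k}(x_k) - f_{ω_k}*)^{1/p} | x_k] ≥ (1/m) min{1, m^{1-1/p}} (f(x_k) - f*)^{1/p}, provided I_k ≠ ∅ and the common-minimizer assumption holds (so ∑_{i∈I_k}(f_i(x_k) - f_i*) = f(x_k) - f*). -/
import Mathlib


/-- Conditional expectation bound for the randomized choice (key estimate in Lemma 3.8):
the uniform average of `(a i)^(1/p)` over the active index set `I` is bounded below in
terms of `(∑ i, a i)^(1/p)`, where `a i = fᵢ(x_k) - fᵢ*`. -/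
theorem stmt14 (m : ℕ) (hm : 0 < m) (p : ℝ) (hp : 0 < p)
    (I : Finset (Fin m)) (hI : I.Nonempty) (a : Fin m → ℝ)
    (haI : ∀ i ∈ I, 0 < a i) (haI' : ∀ i ∉ I, a i = 0) :
    (1 / (m : ℝ)) * min 1 ((m : ℝ) ^ (1 - 1 / p)) * (∑ i, a i) ^ (1 / p) ≤
      (1 / (I.card : ℝ)) * ∑ i ∈ I, a i ^ (1 / p) := by
  set q : ℝ := 1 / p with hqdef
  have hq : 0 < q := by positivity
  set S : ℝ := ∑ i ∈ I, a i with hSdef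
  have hS : 0 < S := Finset.sum_pos haI hI
  have hsum : (∑ i, a i) = S := by
    rw [hSdef]
    exact (Finset.sum_subset (Finset.subset_univ I)
      (fun x _ hx => haI' x hx)).symm
  rw [hsum]
  have hmR : (1 : ℝ) ≤ (m : ℝ) := by exact_mod_cast hm
  have hn0 : 0 < I.card := Finset.card_pos.2 hI
  have hnR : (1 : ℝ) ≤ (I.card : ℝ) := by exact_mod_cast hn0
  have hnm : (I.card : ℝ) ≤ (m : ℝ) := by
    have h := Finset.card_le_univ I
    simp only [Finset.card_univ, Fintype.card_fin] at h
    exact_mod_cast h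
  rcases le_or_gt q 1 with hq1 | hq1
  · -- q ≤ 1 : min = 1 and ∑ a^q ≥ S^q
    have hexp : (0 : ℝ) ≤ 1 - q := by linarith
    have hmin : min (1 : ℝ) ((m : ℝ) ^ (1 - q)) = 1 := by
      refine min_eq_left ?_
      exact Real.one_le_rpow hmR hexp
    have hstep : S ^ q ≤ ∑ i ∈ I, a i ^ q := by
      have h1 : ∀ i ∈ I, a i * S ^ (q - 1) ≤ a i ^ q := by
        intro i hi
        have hai : 0 < a i := haI i hi
        have haiS : a i ≤ S := Finset.single_le_sum (fun j hj => (haI j hj).le) hi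
        have h2 : S ^ (q - 1) ≤ a i ^ (q - 1) :=
          Real.rpow_le_rpow_of_nonpos hai haiS (by linarith)
        calc a i * S ^ (q - 1) ≤ a i * a i ^ (q - 1) := by
              exact mul_le_mul_of_nonneg_left h2 hai.le
          _ = a i ^ q := by
              rw [show q = 1 + (q - 1) by ring, Real.rpow_add hai, Real.rpow_one]
              congr 2
              ring
      calc S ^ q = S * S ^ (q - 1) := by
            rw [show q = 1 + (q - 1) by ring, Real.rpow_add hS, Real.rpow_one]
            congr 2
            ring
        _ = ∑ i ∈ I, a i * S ^ (q - 1) := by rw [← Finset.sum_mul]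
        _ ≤ ∑ i ∈ I, a i ^ q := Finset.sum_le_sum h1
    rw [hmin, mul_one]
    have h3 : (1 / (m : ℝ)) * S ^ q ≤ (1 / (I.card : ℝ)) * S ^ q := by
      have : (1 : ℝ) / m ≤ 1 / I.card := by
        apply one_div_le_one_div_of_le (by positivity) hnm
      exact mul_le_mul_of_nonneg_right this (Real.rpow_nonneg hS.le q)
    refine h3.trans ?_
    exact mul_le_mul_of_nonneg_left hstep (by positivity)
  · -- q > 1 : min = m^(1-q), use power mean inequality
    have hmin : min (1 : ℝ) ((m : ℝ) ^ (1 - q)) = (m : ℝ) ^ (1 - q) := by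
      refine min_eq_right ?_
      exact Real.rpow_le_one_of_one_le_of_nonpos hmR (by linarith)
    rw [hmin]
    have hstep : S ^ q ≤ (I.card : ℝ) ^ (q - 1) * ∑ i ∈ I, a i ^ q :=
      Real.rpow_sum_le_const_mul_sum_rpow_of_nonneg I hq1.le
        (fun i hi => (haI i hi).le)
    have hTnn : 0 ≤ ∑ i ∈ I, a i ^ q :=
      Finset.sum_nonneg fun i hi => Real.rpow_nonneg (haI i hi).le q
    have hnpos : (0 : ℝ) < (I.card : ℝ) := by positivity
    have key : (I.card : ℝ) ^ (1 - q) * S ^ q ≤ ∑ i ∈ I, a i ^ q := by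
      calc (I.card : ℝ) ^ (1 - q) * S ^ q
          ≤ (I.card : ℝ) ^ (1 - q) * ((I.card : ℝ) ^ (q - 1) * ∑ i ∈ I, a i ^ q) :=
            mul_le_mul_of_nonneg_left hstep (Real.rpow_nonneg hnpos.le _)
        _ = ∑ i ∈ I, a i ^ q := by
            rw [← mul_assoc, ← Real.rpow_add hnpos,
              show 1 - q + (q - 1) = (0:ℝ) by ring, Real.rpow_zero, one_mul]
    calc (1 / (m : ℝ)) * (m : ℝ) ^ (1 - q) * S ^ q
        = (m : ℝ) ^ (-q) * S ^ q := by
          rw [one_div, ← Real.rpow_neg_one (m : ℝ), mul_comm ((m:ℝ) ^ (-1:ℝ)),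
            ← Real.rpow_add (by positivity : (0:ℝ) < (m:ℝ)),
            show 1 - q + (-1 : ℝ) = -q by ring]
      _ ≤ (I.card : ℝ) ^ (-q) * S ^ q := by
          apply mul_le_mul_of_nonneg_right _ (Real.rpow_nonneg hS.le q)
          exact Real.rpow_le_rpow_of_nonpos (by positivity) hnm (by linarith)
      _ = (1 / (I.card : ℝ)) * ((I.card : ℝ) ^ (1 - q) * S ^ q) := by
          rw [one_div, ← Real.rpow_neg_one ((I.card : ℝ)), ← mul_assoc,
            ← Real.rpow_add hnpos, show (-1 : ℝ) + (1 - q) = -q by ring]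
      _ ≤ (1 / (I.card : ℝ)) * ∑ i ∈ I, a i ^ q := by
          exact mul_le_mul_of_nonneg_left key (by positivity)
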